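/- Let G be a topological group, N a closed normal subgroup, and suppose every continuous action of N on a compact Hausdorff space has an N-invariant probability measure, and likewise for G/N. Then every continuous action of G on a compact Hausdorff space has a G-invariant probability measure. (Extension of amenability: if N and G/N are amenable, then G is amenable.) -/

import Mathlib

/-- A topological group is amenable if every continuous action on a nonempty compact
Hausdorff space admits an invariant Borel probability measure. -/
def IsAmenable (G : Type*) [Group G] [TopologicalSpace G] : Prop :=
  ∀ (K : Type) [TopologicalSpace K] [CompactSpace K] [T2Space K] [Nonempty K]
    [MeasurableSpace K] [BorelSpace K] [MulAction G K],
    Continuous (fun p : G × K => p.1 • p.2) →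
    ∃ μ : MeasureTheory.ProbabilityMeasure K,
      ∀ g : G, MeasureTheory.Measure.map (fun x : K => g • x) μ.toMeasure = μ.toMeasure


open MeasureTheory Topology BoundedContinuousFunction Set
open scoped NNReal ENNReal

noncomputable section RieszAux

variable {X : Type*} [TopologicalSpace X] [CompactSpace X] [T2Space X]

/-- A nonnegative bounded continuous function, as a real-valued continuous map. -/
def bcnnToCM (f : CompactlySupportedContinuousMap X ℝ≥0) : C(X, ℝ) :=
  ⟨fun x => ((f x : ℝ≥0) : ℝ), NNReal.continuous_coe.comp f.continuous⟩

variable (ψ : C(X, ℝ) →ₗ[ℝ] ℝ) (hpos : ∀ f : C(X, ℝ), (∀ x, 0 ≤ f x) → 0 ≤ ψ f)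

theorem psi_mono (hpos : ∀ f : C(X, ℝ), (∀ x, 0 ≤ f x) → 0 ≤ ψ f) {f g : C(X, ℝ)} (h : ∀ x, f x ≤ g x) : ψ f ≤ ψ g := by
  have h0 : 0 ≤ ψ (g - f) := hpos _ (fun x => by simpa using sub_nonneg.mpr (h x))
  have := map_sub ψ g f
  linarith [this ▸ h0]

/-- The positive functional on nonnegative bounded continuous functions induced by `ψ`. -/
def psiΛ : CompactlySupportedContinuousMap X ℝ≥0 →ₗ[ℝ≥0] ℝ≥0 where
  toFun f := ⟨ψ (bcnnToCM f), hpos _ (fun x => (f x).2)⟩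
  map_add' f g := by
    ext
    have : bcnnToCM (f + g) = bcnnToCM f + bcnnToCM g := by
      ext x; simp [bcnnToCM]
    show ψ (bcnnToCM (f + g)) = ψ (bcnnToCM f) + ψ (bcnnToCM g)
    rw [this, map_add]
  map_smul' r f := by
    ext
    have : bcnnToCM (r • f) = (r : ℝ) • bcnnToCM f := by
      ext x; simp [bcnnToCM, NNReal.coe_mul]
    show ψ (bcnnToCM (r • f)) = (r : ℝ) * ψ (bcnnToCM f)
    rw [this, _root_.map_smul, smul_eq_mul]

theorem psiΛ_apply (f : CompactlySupportedContinuousMap X ℝ≥0) : ((psiΛ ψ hpos f : ℝ≥0) : ℝ) = ψ (bcnnToCM f) := rfl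

/-- The Riesz content associated to a positive normalized functional. -/
def psiContent : Content X where
  toFun := rieszContentAux (psiΛ ψ hpos)
  mono' := fun _ _ h => rieszContentAux_mono _ h
  sup_le' := rieszContentAux_sup_le _
  sup_disjoint' := by
    intro K₁ K₂ hd _ _
    exact rieszContentAux_union _ hd

variable [MeasurableSpace X] [BorelSpace X]

/-- The measure associated to a positive normalized functional. -/
def psiMeasure : Measure X := (psiContent ψ hpos).measure

theorem psiContent_univ (hone : ψ 1 = 1) :
    rieszContentAux (psiΛ ψ hpos) ⟨univ, isCompact_univ⟩ = 1 := by
  apply le_antisymm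
  · have h1 : psiΛ ψ hpos (CompactlySupportedContinuousMap.continuousMapEquiv (1 : C(X, ℝ≥0))) = 1 := by
      ext
      rw [psiΛ_apply]
      have : bcnnToCM (CompactlySupportedContinuousMap.continuousMapEquiv (1 : C(X, ℝ≥0))) = 1 := by
        ext x; show ((1 : C(X, ℝ≥0)) x : ℝ) = 1; simp
      simp [this, hone]
    have := rieszContentAux_le (psiΛ ψ hpos)
      (K := (⟨univ, isCompact_univ⟩ : TopologicalSpace.Compacts X)) (f := CompactlySupportedContinuousMap.continuousMapEquiv (1 : C(X, ℝ≥0)))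
      (fun x _ => le_refl _)
    simpa [h1] using this
  · refine le_csInf (rieszContentAux_image_nonempty _ _) ?_
    rintro b ⟨f, hf, rfl⟩
    rw [← NNReal.coe_le_coe, NNReal.coe_one, psiΛ_apply]
    have : ψ 1 ≤ ψ (bcnnToCM f) := by
      apply psi_mono ψ hpos
      intro x
      have := hf x (mem_univ x)
      simpa [bcnnToCM] using this
    linarith [this, hone]

theorem psiMeasure_prob (hone : ψ 1 = 1) : IsProbabilityMeasure (psiMeasure ψ hpos) := by
  constructor
  rw [psiMeasure, Content.measure_apply _ MeasurableSet.univ,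
    (psiContent ψ hpos).outerMeasure_of_isOpen univ isOpen_univ,
    (psiContent ψ hpos).innerContent_of_isCompact isCompact_univ isOpen_univ]
  show ((rieszContentAux (psiΛ ψ hpos) ⟨univ, isCompact_univ⟩ : ℝ≥0) : ℝ≥0∞) = 1
  rw [psiContent_univ ψ hpos hone]
  rfl

theorem psiContent_map_le (e : X ≃ₜ X)
    (hinv : ∀ f : C(X, ℝ), ψ (f.comp (e : C(X, X))) = ψ f) (K : TopologicalSpace.Compacts X) :
    rieszContentAux (psiΛ ψ hpos) (K.map e e.continuous) ≤ rieszContentAux (psiΛ ψ hpos) K := by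
  refine le_csInf (rieszContentAux_image_nonempty _ _) ?_
  rintro b ⟨f, hf, rfl⟩
  have hΛ : ∀ h : CompactlySupportedContinuousMap X ℝ≥0,
      psiΛ ψ hpos (h.comp e.toCocompactMap) = psiΛ ψ hpos h := by
    intro h
    ext
    rw [psiΛ_apply, psiΛ_apply, ← hinv (bcnnToCM h)]
    rfl
  set g : CompactlySupportedContinuousMap X ℝ≥0 := f.comp e.symm.toCocompactMap with hg
  have hgK : ∀ x ∈ (K.map e e.continuous : Set X), (1 : ℝ≥0) ≤ g x := by
    rintro x ⟨y, hy, rfl⟩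
    have : g (e y) = f y := by show f (e.symm (e y)) = f y; simp
    rw [this]
    exact hf y hy
  have h1 : rieszContentAux (psiΛ ψ hpos) (K.map e e.continuous) ≤ psiΛ ψ hpos g :=
    rieszContentAux_le _ hgK
  have h2 : psiΛ ψ hpos g = psiΛ ψ hpos f := by
    rw [← hΛ g]
    congr 1
    ext x
    show ((f (e.symm (e x)) : ℝ≥0) : ℝ) = f x; simp
  rw [h2] at h1
  exact h1

theorem psiMeasure_map (e : X ≃ₜ X)
    (hinv : ∀ f : C(X, ℝ), ψ (f.comp (e : C(X, X))) = ψ f) :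
    Measure.map e (psiMeasure ψ hpos) = psiMeasure ψ hpos := by
  have hinv' : ∀ f : C(X, ℝ), ψ (f.comp (e.symm : C(X, X))) = ψ f := by
    intro f
    have : (f.comp (e.symm : C(X, X))).comp (e : C(X, X)) = f := by
      ext x; simp
    rw [← hinv (f.comp (e.symm : C(X, X))), this]
  have hK : ∀ ⦃K : TopologicalSpace.Compacts X⦄,
      (psiContent ψ hpos) (K.map e e.continuous) = (psiContent ψ hpos) K := by
    intro K
    have h0 : rieszContentAux (psiΛ ψ hpos) (K.map e e.continuous)
        = rieszContentAux (psiΛ ψ hpos) K := by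
      refine le_antisymm (psiContent_map_le ψ hpos e hinv K) ?_
      have := psiContent_map_le ψ hpos e.symm hinv' (K.map e e.continuous)
      have heq : (K.map e e.continuous).map e.symm e.symm.continuous = K := by
        apply TopologicalSpace.Compacts.ext
        simp [TopologicalSpace.Compacts.coe_map, Set.image_image]
      rwa [heq] at this
    show ((rieszContentAux (psiΛ ψ hpos) (K.map e e.continuous) : ℝ≥0) : ℝ≥0∞)
      = ((rieszContentAux (psiΛ ψ hpos) K : ℝ≥0) : ℝ≥0∞)
    exact congrArg _ h0
  ext s hs
  rw [Measure.map_apply e.continuous.measurable hs, psiMeasure,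
    Content.measure_apply _ (hs.preimage e.continuous.measurable),
    Content.measure_apply _ hs,
    (psiContent ψ hpos).outerMeasure_preimage e hK s]

end RieszAux



noncomputable section StateSpace

variable {G : Type*} [Group G] [TopologicalSpace G]
variable {K : Type} [TopologicalSpace K] [CompactSpace K] [T2Space K] [Nonempty K]
  [MulAction G K]

variable (hc : Continuous fun p : G × K => p.1 • p.2)

/-- Translation by `g` as a continuous self-map of `K`. -/
def actCM (g : G) : C(K, K) := ⟨fun x => g • x, hc.comp (Continuous.prodMk_right g)⟩

/-- Pullback of continuous functions along translation by `g`. -/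
def actT (g : G) : C(K, ℝ) →L[ℝ] C(K, ℝ) :=
  LinearMap.mkContinuous
    { toFun := fun f => f.comp (actCM hc g)
      map_add' := fun f₁ f₂ => rfl
      map_smul' := fun c f => rfl } 1
    (fun f => by
      rw [one_mul]
      apply ContinuousMap.norm_le _ (norm_nonneg f) |>.mpr
      intro x
      exact f.norm_coe_le_norm _)

theorem actT_apply (g : G) (f : C(K, ℝ)) (x : K) : actT hc g f x = f (g • x) := rfl

/-- The action of `G` on the weak dual of `C(K, ℝ)`. -/
def actW (g : G) (φ : WeakDual ℝ C(K, ℝ)) : WeakDual ℝ C(K, ℝ) :=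
  φ.comp (actT hc g)

theorem actW_apply (g : G) (φ : WeakDual ℝ C(K, ℝ)) (f : C(K, ℝ)) :
    actW hc g φ f = φ (actT hc g f) := rfl

theorem actW_one (φ : WeakDual ℝ C(K, ℝ)) : actW hc 1 φ = φ := by
  apply ContinuousLinearMap.ext
  intro f
  show φ (actT hc 1 f) = φ f
  congr 1
  ext x
  rw [actT_apply, one_smul]

theorem actW_mul (g h : G) (φ : WeakDual ℝ C(K, ℝ)) :
    actW hc (g * h) φ = actW hc g (actW hc h φ) := by
  apply ContinuousLinearMap.ext
  intro f
  show φ (actT hc (g * h) f) = φ (actT hc h (actT hc g f))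
  congr 1
  ext x
  rw [actT_apply, actT_apply, actT_apply, mul_smul]

/-- The state space of `C(K, ℝ)`: positive normalized functionals. -/
def states : Set (WeakDual ℝ C(K, ℝ)) :=
  {φ | (∀ f : C(K, ℝ), (∀ x, 0 ≤ f x) → 0 ≤ φ f) ∧ φ 1 = 1}

theorem states_abs_le {φ : WeakDual ℝ C(K, ℝ)} (hφ : φ ∈ states) (f : C(K, ℝ)) :
    |φ f| ≤ ‖f‖ := by
  have h1 : φ ((‖f‖ : ℝ) • (1 : C(K, ℝ)) - f) ≥ 0 := by
    apply hφ.1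
    intro x
    have := f.norm_coe_le_norm x
    simp only [ContinuousMap.sub_apply, ContinuousMap.smul_apply, ContinuousMap.one_apply,
      smul_eq_mul, mul_one]
    have : |f x| ≤ ‖f‖ := by simpa [Real.norm_eq_abs] using this
    linarith [abs_le.mp this]
  have h2 : φ ((‖f‖ : ℝ) • (1 : C(K, ℝ)) + f) ≥ 0 := by
    apply hφ.1
    intro x
    have := f.norm_coe_le_norm x
    simp only [ContinuousMap.add_apply, ContinuousMap.smul_apply, ContinuousMap.one_apply,
      smul_eq_mul, mul_one]
    have : |f x| ≤ ‖f‖ := by simpa [Real.norm_eq_abs] using this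
    linarith [abs_le.mp this]
  have e1 : φ ((‖f‖ : ℝ) • (1 : C(K, ℝ)) - f) = ‖f‖ * φ 1 - φ f := by
    rw [map_sub, _root_.map_smul]; simp
  have e2 : φ ((‖f‖ : ℝ) • (1 : C(K, ℝ)) + f) = ‖f‖ * φ 1 + φ f := by
    rw [map_add, _root_.map_smul]; simp
  rw [e1, hφ.2, mul_one] at h1
  rw [e2, hφ.2, mul_one] at h2
  rw [abs_le]
  constructor <;> linarith

theorem states_isCompact : IsCompact (states (K := K)) := by
  have hsub : states (K := K) ⊆ WeakDual.toStrongDual ⁻¹' Metric.closedBall 0 1 := by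
    intro φ hφ
    simp only [mem_preimage, Metric.mem_closedBall, dist_zero_right]
    apply ContinuousLinearMap.opNorm_le_bound _ zero_le_one
    intro f
    rw [one_mul]
    simpa [Real.norm_eq_abs] using states_abs_le hφ f
  have hclosed : IsClosed (states (K := K)) := by
    have h1 : IsClosed {φ : WeakDual ℝ C(K, ℝ) |
        ∀ f : C(K, ℝ), (∀ x, 0 ≤ f x) → 0 ≤ φ f} := by
      have : {φ : WeakDual ℝ C(K, ℝ) | ∀ f : C(K, ℝ), (∀ x, 0 ≤ f x) → 0 ≤ φ f}
          = ⋂ (f : C(K, ℝ)) (_ : ∀ x, 0 ≤ f x), {φ : WeakDual ℝ C(K, ℝ) | 0 ≤ φ f} := by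
        ext φ; simp
      rw [this]
      exact isClosed_iInter fun f => isClosed_iInter fun _ =>
        isClosed_le continuous_const (WeakDual.eval_continuous f)
    have h2 : IsClosed {φ : WeakDual ℝ C(K, ℝ) | φ 1 = 1} :=
      isClosed_eq (WeakDual.eval_continuous 1) continuous_const
    exact h1.inter h2
  exact (WeakDual.isCompact_closedBall (𝕜 := ℝ) (E := C(K, ℝ)) 0 1).of_isClosed_subset hclosed hsub

theorem states_nonempty : (states (K := K)).Nonempty := by
  obtain ⟨x⟩ := ‹Nonempty K›
  refine ⟨LinearMap.mkContinuous
    { toFun := fun f : C(K, ℝ) => f x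
      map_add' := fun f g => rfl
      map_smul' := fun c f => rfl } 1
    (fun f => by simpa using f.norm_coe_le_norm x), ?_, rfl⟩
  intro f hf
  exact hf x

theorem actW_mem_states {g : G} {φ : WeakDual ℝ C(K, ℝ)} (hφ : φ ∈ states) :
    actW hc g φ ∈ states := by
  constructor
  · intro f hf
    exact hφ.1 _ (fun x => hf (g • x))
  · have : actT hc g (1 : C(K, ℝ)) = 1 := by ext x; rfl
    show φ (actT hc g 1) = 1
    rw [this, hφ.2]

theorem continuous_actT (f : C(K, ℝ)) : Continuous fun g : G => actT hc g f := by
  have : (fun g : G => actT hc g f)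
      = ⇑(ContinuousMap.curry (f.comp ⟨fun p : G × K => p.1 • p.2, hc⟩)) := by
    funext g
    ext x
    rfl
  rw [this]
  exact (ContinuousMap.curry _).continuous

theorem continuous_actW_sub (A : Set (WeakDual ℝ C(K, ℝ))) (hA : A ⊆ states) :
    Continuous fun p : G × A => actW hc p.1 (p.2 : WeakDual ℝ C(K, ℝ)) := by
  apply WeakDual.continuous_of_continuous_eval
  intro f
  rw [continuous_iff_continuousAt]
  intro p₀
  have h2 : Filter.Tendsto (fun p : G × A => (p.2 : WeakDual ℝ C(K, ℝ)) (actT hc p₀.1 f))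
      (nhds p₀) (nhds ((p₀.2 : WeakDual ℝ C(K, ℝ)) (actT hc p₀.1 f))) :=
    ((WeakDual.eval_continuous (actT hc p₀.1 f)).comp
      (continuous_subtype_val.comp continuous_snd)).continuousAt
  have hnorm : Filter.Tendsto (fun p : G × A => ‖actT hc p.1 f - actT hc p₀.1 f‖)
      (nhds p₀) (nhds 0) := by
    have hcont : Continuous fun p : G × A => ‖actT hc p.1 f - actT hc p₀.1 f‖ :=
      (((continuous_actT hc f).comp continuous_fst).sub continuous_const).norm
    have := hcont.tendsto p₀
    simpa using this
  have h1 : Filter.Tendsto (fun p : G × A =>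
      (p.2 : WeakDual ℝ C(K, ℝ)) (actT hc p.1 f)
        - (p.2 : WeakDual ℝ C(K, ℝ)) (actT hc p₀.1 f)) (nhds p₀) (nhds 0) := by
    apply squeeze_zero_norm _ hnorm
    intro p
    have : (p.2 : WeakDual ℝ C(K, ℝ)) (actT hc p.1 f)
        - (p.2 : WeakDual ℝ C(K, ℝ)) (actT hc p₀.1 f)
        = (p.2 : WeakDual ℝ C(K, ℝ)) (actT hc p.1 f - actT hc p₀.1 f) := by
      rw [map_sub]
    rw [this]
    calc ‖(p.2 : WeakDual ℝ C(K, ℝ)) (actT hc p.1 f - actT hc p₀.1 f)‖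
        = |(p.2 : WeakDual ℝ C(K, ℝ)) (actT hc p.1 f - actT hc p₀.1 f)| := rfl
      _ ≤ ‖actT hc p.1 f - actT hc p₀.1 f‖ := states_abs_le (hA p.2.2) _
  have htt := h1.add h2
  rw [zero_add] at htt
  exact Filter.Tendsto.congr (fun p => by
    show ((p.2 : WeakDual ℝ C(K, ℝ)) (actT hc p.1 f)
        - (p.2 : WeakDual ℝ C(K, ℝ)) (actT hc p₀.1 f))
        + (p.2 : WeakDual ℝ C(K, ℝ)) (actT hc p₀.1 f)
        = (p.2 : WeakDual ℝ C(K, ℝ)) (actT hc p.1 f)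
    ring) htt

/-- Barycenter of a probability measure supported on a set of states. -/
theorem bary_exists (A : Set (WeakDual ℝ C(K, ℝ))) (hA : A ⊆ states)
    [MeasurableSpace A] [OpensMeasurableSpace A]
    (m : Measure A) [IsProbabilityMeasure m] :
    ∃ ψ : WeakDual ℝ C(K, ℝ), ψ ∈ states ∧
      ∀ f : C(K, ℝ), ψ f = ∫ φ : A, (φ : WeakDual ℝ C(K, ℝ)) f ∂m := by
  have hcont : ∀ f : C(K, ℝ), Continuous fun φ : A => (φ : WeakDual ℝ C(K, ℝ)) f :=
    fun f => (WeakDual.eval_continuous f).comp continuous_subtype_val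
  have hint : ∀ f : C(K, ℝ), Integrable (fun φ : A => (φ : WeakDual ℝ C(K, ℝ)) f) m := by
    intro f
    exact (BoundedContinuousFunction.ofNormedAddCommGroup _ (hcont f) ‖f‖
      (fun φ => by simpa [Real.norm_eq_abs] using states_abs_le (hA φ.2) f)).integrable m
  refine ⟨LinearMap.mkContinuous
    { toFun := fun f : C(K, ℝ) => ∫ φ : A, (φ : WeakDual ℝ C(K, ℝ)) f ∂m
      map_add' := fun f g => by
        have heq : (fun φ : A => (φ : WeakDual ℝ C(K, ℝ)) (f + g))
            = fun φ : A => (φ : WeakDual ℝ C(K, ℝ)) f + (φ : WeakDual ℝ C(K, ℝ)) g := by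
          funext φ; rw [map_add]
        show ∫ φ : A, (φ : WeakDual ℝ C(K, ℝ)) (f + g) ∂m = _
        rw [heq, integral_add (hint f) (hint g)]
      map_smul' := fun c f => by
        have heq : (fun φ : A => (φ : WeakDual ℝ C(K, ℝ)) (c • f))
            = fun φ : A => c * (φ : WeakDual ℝ C(K, ℝ)) f := by
          funext φ
          rw [_root_.map_smul]
          rfl
        show ∫ φ : A, (φ : WeakDual ℝ C(K, ℝ)) (c • f) ∂m
          = c • ∫ φ : A, (φ : WeakDual ℝ C(K, ℝ)) f ∂m
        rw [heq, ← integral_smul]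
        simp [smul_eq_mul] } 1
    (fun f => by
      rw [one_mul]
      apply norm_integral_le_of_norm_le_const (C := ‖f‖) ?_ |>.trans
      · simp
      · filter_upwards with φ
        simpa [Real.norm_eq_abs] using states_abs_le (hA φ.2) f), ?_, fun f => rfl⟩
  constructor
  · intro f hf
    exact integral_nonneg fun φ => (hA φ.2).1 f hf
  · show ∫ φ : A, (φ : WeakDual ℝ C(K, ℝ)) 1 ∂m = 1
    have : ∀ φ : A, (φ : WeakDual ℝ C(K, ℝ)) (1 : C(K, ℝ)) = 1 := fun φ => (hA φ.2).2
    rw [integral_congr_ae (Filter.Eventually.of_forall this)]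
    simp

end StateSpace


section Main

open MeasureTheory Topology Set

/-- Extension of amenability: if a closed normal subgroup N and the quotient G/N are
amenable, then G is amenable. -/
theorem isAmenable_of_closed_normal_extension {G : Type*} [Group G] [TopologicalSpace G]
    [IsTopologicalGroup G] (N : Subgroup G) [N.Normal] (hclosed : IsClosed (N : Set G))
    (hN : IsAmenable N) (hQ : IsAmenable (G ⧸ N)) : IsAmenable G := by
  intro K _ _ _ _ _ _ _ hc
  classical
  -- Step 1: there is an N-invariant state
  have step1 : ∃ φ ∈ states (K := K), ∀ n ∈ N, actW hc n φ = φ := by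
    letI : MeasurableSpace (states (K := K)) := borel _
    haveI : BorelSpace (states (K := K)) := ⟨rfl⟩
    haveI : CompactSpace (states (K := K)) := isCompact_iff_compactSpace.mp states_isCompact
    haveI : Nonempty (states (K := K)) := states_nonempty.to_subtype
    letI : MulAction N (states (K := K)) :=
      { smul := fun n φ => ⟨actW hc (n : G) (φ : WeakDual ℝ C(K, ℝ)), actW_mem_states hc φ.2⟩
        one_smul := fun φ => Subtype.ext (actW_one hc (φ : WeakDual ℝ C(K, ℝ)))
        mul_smul := fun a b φ => Subtype.ext (actW_mul hc (a : G) (b : G) _) }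
    have hcN : Continuous fun p : N × states (K := K) => p.1 • p.2 := by
      apply Continuous.subtype_mk
      exact (continuous_actW_sub hc _ (subset_refl _)).comp
        ((continuous_subtype_val.comp continuous_fst).prodMk continuous_snd)
    obtain ⟨m, hm⟩ := hN (states (K := K)) hcN
    obtain ⟨ψ, hψS, hψeq⟩ := bary_exists (states (K := K)) (subset_refl _) m.toMeasure
    refine ⟨ψ, hψS, ?_⟩
    intro n hn
    apply ContinuousLinearMap.ext
    intro f
    have hsm : Continuous fun φ : states (K := K) => (⟨n, hn⟩ : N) • φ :=
      hcN.comp (continuous_const.prodMk continuous_id)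
    have hint : AEStronglyMeasurable (fun σ : states (K := K) =>
        (σ : WeakDual ℝ C(K, ℝ)) f)
        (Measure.map (fun φ => (⟨n, hn⟩ : N) • φ) m.toMeasure) :=
      ((WeakDual.eval_continuous f).comp continuous_subtype_val).aestronglyMeasurable
    calc actW hc n ψ f
        = ∫ φ : states (K := K), (φ : WeakDual ℝ C(K, ℝ)) (actT hc n f) ∂m.toMeasure := by
          rw [actW_apply, hψeq]
      _ = ∫ φ : states (K := K),
            (fun σ : states (K := K) => (σ : WeakDual ℝ C(K, ℝ)) f)
              ((⟨n, hn⟩ : N) • φ) ∂m.toMeasure := rfl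
      _ = ∫ σ : states (K := K), (σ : WeakDual ℝ C(K, ℝ)) f
            ∂(Measure.map (fun φ => (⟨n, hn⟩ : N) • φ) m.toMeasure) :=
          (integral_map hsm.measurable.aemeasurable hint).symm
      _ = ∫ σ : states (K := K), (σ : WeakDual ℝ C(K, ℝ)) f ∂m.toMeasure := by
          rw [hm ⟨n, hn⟩]
      _ = ψ f := (hψeq f).symm
  -- The set of N-invariant states
  set NInv : Set (WeakDual ℝ C(K, ℝ)) :=
    {φ | φ ∈ states (K := K) ∧ ∀ n ∈ N, actW hc n φ = φ} with hNInvdef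
  have hNInv_sub : NInv ⊆ states (K := K) := fun φ hφ => hφ.1
  have hNInv_closed : IsClosed NInv := by
    have h1 : IsClosed (states (K := K)) := states_isCompact.isClosed
    have h2 : ∀ n : G, IsClosed {φ : WeakDual ℝ C(K, ℝ) | actW hc n φ = φ} := by
      intro n
      have : {φ : WeakDual ℝ C(K, ℝ) | actW hc n φ = φ}
          = ⋂ f : C(K, ℝ), {φ : WeakDual ℝ C(K, ℝ) | φ (actT hc n f) = φ f} := by
        ext φ
        simp only [mem_setOf_eq, mem_iInter]
        constructor
        · intro h f
          rw [← actW_apply, h]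
        · intro h
          exact ContinuousLinearMap.ext h
      rw [this]
      exact isClosed_iInter fun f =>
        isClosed_eq (WeakDual.eval_continuous _) (WeakDual.eval_continuous _)
    have heq : NInv = states (K := K) ∩ ⋂ (n : G) (_ : n ∈ N),
        {φ : WeakDual ℝ C(K, ℝ) | actW hc n φ = φ} := by
      ext φ
      simp only [hNInvdef, mem_setOf_eq, mem_inter_iff, mem_iInter]
    rw [heq]
    exact h1.inter (isClosed_iInter fun n => isClosed_iInter fun _ => h2 n)
  have hNInv_cpt : IsCompact NInv :=
    states_isCompact.of_isClosed_subset hNInv_closed hNInv_sub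
  obtain ⟨φ₁, hφ₁S, hφ₁inv⟩ := step1
  have hNInv_ne : NInv.Nonempty := ⟨φ₁, hφ₁S, hφ₁inv⟩
  have hmemNInv : ∀ (g : G) {φ : WeakDual ℝ C(K, ℝ)}, φ ∈ NInv → actW hc g φ ∈ NInv := by
    intro g φ hφ
    refine ⟨actW_mem_states hc hφ.1, ?_⟩
    intro n hn
    have hconj : g⁻¹ * n * g ∈ N := by
      have := (‹N.Normal›).conj_mem n hn g⁻¹
      simpa using this
    calc actW hc n (actW hc g φ) = actW hc (n * g) φ := (actW_mul hc n g φ).symm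
      _ = actW hc (g * (g⁻¹ * n * g)) φ := by group
      _ = actW hc g (actW hc (g⁻¹ * n * g) φ) := actW_mul hc _ _ φ
      _ = actW hc g φ := by rw [hφ.2 _ hconj]
  -- Step 2: a G-invariant state via amenability of G / N
  have step2 : ∃ ψ ∈ states (K := K), ∀ g : G, actW hc g ψ = ψ := by
    letI : MeasurableSpace NInv := borel _
    haveI : BorelSpace NInv := ⟨rfl⟩
    haveI : CompactSpace NInv := isCompact_iff_compactSpace.mp hNInv_cpt
    haveI : Nonempty NInv := hNInv_ne.to_subtype
    letI : MulAction (G ⧸ N) NInv :=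
      { smul := fun q σ => Quotient.liftOn' q
          (fun g => (⟨actW hc g (σ : WeakDual ℝ C(K, ℝ)), hmemNInv g σ.2⟩ : NInv))
          (by
            intro a b hab
            rw [QuotientGroup.leftRel_apply] at hab
            apply Subtype.ext
            show actW hc a _ = actW hc b _
            calc actW hc a (σ : WeakDual ℝ C(K, ℝ))
                = actW hc a (actW hc (a⁻¹ * b) (σ : WeakDual ℝ C(K, ℝ))) := by
                  rw [σ.2.2 _ hab]
              _ = actW hc (a * (a⁻¹ * b)) (σ : WeakDual ℝ C(K, ℝ)) := (actW_mul hc _ _ _).symm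
              _ = actW hc b (σ : WeakDual ℝ C(K, ℝ)) := by rw [mul_inv_cancel_left])
        one_smul := fun σ => Subtype.ext (actW_one hc (σ : WeakDual ℝ C(K, ℝ)))
        mul_smul := fun q r σ => Quotient.inductionOn₂' q r fun a b =>
          Subtype.ext (actW_mul hc a b (σ : WeakDual ℝ C(K, ℝ))) }
    have hGact : Continuous fun p : G × NInv =>
        ((QuotientGroup.mk p.1 : G ⧸ N) • p.2) := by
      apply Continuous.subtype_mk
      exact continuous_actW_sub hc NInv hNInv_sub
    have hQact : Continuous fun p : (G ⧸ N) × NInv => p.1 • p.2 := by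
      rw [← (QuotientGroup.isOpenQuotientMap_mk.prodMap IsOpenQuotientMap.id).continuous_comp_iff]
      exact hGact
    obtain ⟨m, hm⟩ := hQ NInv hQact
    obtain ⟨ψ, hψS, hψeq⟩ := bary_exists NInv hNInv_sub m.toMeasure
    refine ⟨ψ, hψS, ?_⟩
    intro g
    apply ContinuousLinearMap.ext
    intro f
    have hsm : Continuous fun φ : NInv => (QuotientGroup.mk g : G ⧸ N) • φ :=
      hQact.comp (continuous_const.prodMk continuous_id)
    have hint : AEStronglyMeasurable (fun σ : NInv => (σ : WeakDual ℝ C(K, ℝ)) f)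
        (Measure.map (fun φ => (QuotientGroup.mk g : G ⧸ N) • φ) m.toMeasure) :=
      ((WeakDual.eval_continuous f).comp continuous_subtype_val).aestronglyMeasurable
    calc actW hc g ψ f
        = ∫ φ : NInv, (φ : WeakDual ℝ C(K, ℝ)) (actT hc g f) ∂m.toMeasure := by
          rw [actW_apply, hψeq]
      _ = ∫ φ : NInv, (fun σ : NInv => (σ : WeakDual ℝ C(K, ℝ)) f)
            ((QuotientGroup.mk g : G ⧸ N) • φ) ∂m.toMeasure := rfl
      _ = ∫ σ : NInv, (σ : WeakDual ℝ C(K, ℝ)) f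
            ∂(Measure.map (fun φ => (QuotientGroup.mk g : G ⧸ N) • φ) m.toMeasure) :=
          (integral_map hsm.measurable.aemeasurable hint).symm
      _ = ∫ σ : NInv, (σ : WeakDual ℝ C(K, ℝ)) f ∂m.toMeasure := by rw [hm _]
      _ = ψ f := (hψeq f).symm
  -- Step 3: the invariant state gives an invariant regular Borel measure
  obtain ⟨ψ, hψS, hψinv⟩ := step2
  have hpos : ∀ f : C(K, ℝ), (∀ x, 0 ≤ f x) → 0 ≤ ψ.toLinearMap f := hψS.1
  have hone : ψ.toLinearMap 1 = 1 := hψS.2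
  refine ⟨⟨psiMeasure ψ.toLinearMap hpos, psiMeasure_prob _ _ hone⟩, ?_⟩
  intro g
  let e : K ≃ₜ K :=
    { toFun := fun x => g • x
      invFun := fun x => g⁻¹ • x
      left_inv := fun x => inv_smul_smul g x
      right_inv := fun x => smul_inv_smul g x
      continuous_toFun := hc.comp (Continuous.prodMk_right g)
      continuous_invFun := hc.comp (Continuous.prodMk_right g⁻¹) }
  have hinv : ∀ f : C(K, ℝ), ψ.toLinearMap (f.comp (e : C(K, K))) = ψ.toLinearMap f := by
    intro f
    have h1 : f.comp (e : C(K, K)) = actT hc g f := by ext x; rfl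
    rw [h1]
    calc ψ (actT hc g f) = actW hc g ψ f := rfl
      _ = ψ f := by rw [hψinv g]
  show Measure.map (fun x : K => g • x) (psiMeasure ψ.toLinearMap hpos) = _
  have he : (fun x : K => g • x) = ⇑e := rfl
  rw [he, psiMeasure_map ψ.toLinearMap hpos e hinv]
  rfl

end Main
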